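/- Let a, b be nonzero real numbers with a/b irrational, let k be a positive integer, and let m : ℤ → ℤ be any function. Then the set of complex numbers { (a + 2πikn) / (b + 2πi·m(n)) : n ∈ ℤ } is infinite. -/
import Mathlib


open Complex

theorem stmt_0 (a b : ℝ) (ha : a ≠ 0) (hb : b ≠ 0) (hab : Irrational (a / b))
    (k : ℕ) (hk : 0 < k) (m : ℤ → ℤ) :
    {z : ℂ | ∃ n : ℤ, z = ((a : ℂ) + 2 * Real.pi * Complex.I * k * n) /
        ((b : ℂ) + 2 * Real.pi * Complex.I * (m n))}.Infinite := by
  have hπ := Real.pi_pos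
  set f : ℤ → ℂ := fun n => ((a : ℂ) + 2 * Real.pi * Complex.I * k * n) /
        ((b : ℂ) + 2 * Real.pi * Complex.I * (m n)) with hf
  have hden : ∀ n : ℤ, ((b : ℂ) + 2 * Real.pi * Complex.I * (m n)) ≠ 0 := by
    intro n h
    have := congrArg Complex.re h
    simp [Complex.add_re, Complex.mul_re, Complex.mul_im] at this
    exact hb this
  have hinj : Function.Injective f := by
    intro n1 n2 h
    simp only [hf] at h
    rw [div_eq_div_iff (hden n1) (hden n2)] at h
    have hre := congrArg Complex.re h
    have him := congrArg Complex.im h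
    simp [Complex.mul_re, Complex.mul_im, Complex.add_re, Complex.add_im,
      Complex.ofReal_re, Complex.ofReal_im] at hre him
    have h2π : (2 * Real.pi) ≠ 0 := by positivity
    have key : a * ((m n2 : ℝ) - (m n1 : ℝ)) = (k : ℝ) * b * ((n2 : ℝ) - (n1 : ℝ)) := by
      apply mul_left_cancel₀ h2π
      ring_nf
      ring_nf at him
      linarith
    by_cases hm : m n1 = m n2
    · have h0 : (k : ℝ) * b * ((n2 : ℝ) - (n1 : ℝ)) = 0 := by
        rw [hm] at key; simpa using key.symm
      have hkb : (k : ℝ) * b ≠ 0 := by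
        have : (k : ℝ) ≠ 0 := Nat.cast_ne_zero.2 hk.ne'
        exact mul_ne_zero this hb
      have : (n2 : ℝ) - (n1 : ℝ) = 0 := by
        rcases mul_eq_zero.1 h0 with h | h
        · exact absurd h hkb
        · exact h
      have : (n1 : ℝ) = (n2 : ℝ) := by linarith
      exact_mod_cast this
    · exfalso
      apply hab
      refine ⟨((k : ℤ) * (n2 - n1) : ℤ) / ((m n2 - m n1 : ℤ) : ℚ), ?_⟩
      have hmne : ((m n2 : ℝ)) - (m n1 : ℝ) ≠ 0 := by
        rw [sub_ne_zero]
        exact_mod_cast Ne.symm hm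
      push_cast
      rw [div_eq_div_iff hmne hb]
      linarith [key]
  have hset : {z : ℂ | ∃ n : ℤ, z = ((a : ℂ) + 2 * Real.pi * Complex.I * k * n) /
        ((b : ℂ) + 2 * Real.pi * Complex.I * (m n))} = Set.range f := by
    ext z; simp [hf, Set.range, eq_comm]
  rw [hset]
  exact Set.infinite_range_of_injective hinj
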